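/- arXiv:1802.03364 — 2 statements merged into one kernel-verified Lean document; each statement's English description precedes it below -/
import Mathlib

section
/- Let C be a finite collection of nonempty subsets of [n] and w : C → (0,∞) satisfy Σ{w(σ) : i ∈ σ ∈ C} = 1 for every i ∈ [n]. Then for every compact subset K of ℝⁿ, |K| ≤ ∏_{σ∈C} |P_{F_σ}(K)|^{w(σ)}. -/
open MeasureTheory Submodule
open scoped ENNReal

noncomputable def coordSubspace (n : ℕ) (σ : Finset (Fin n)) : Submodule ℝ (EuclideanSpace ℝ (Fin n)) :=
  Submodule.span ℝ ((fun j => EuclideanSpace.single j (1:ℝ)) '' σ)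

noncomputable def projCLM {n : ℕ} (F : Submodule ℝ (EuclideanSpace ℝ (Fin n))) :
    EuclideanSpace ℝ (Fin n) →L[ℝ] EuclideanSpace ℝ (Fin n) :=
  F.subtypeL.comp (orthogonalProjection F)

/-- `d`-dimensional volume of `A ∩ F` computed inside the subspace `F`. -/
noncomputable def svol {n : ℕ} (F : Submodule ℝ (EuclideanSpace ℝ (Fin n)))
    (A : Set (EuclideanSpace ℝ (Fin n))) : ℝ≥0∞ :=
  volume ((stdOrthonormalBasis ℝ F).repr '' ((↑) ⁻¹' A : Set F))

/-- Integral of `f` over the subspace `F` w.r.t. Lebesgue measure induced by the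
Euclidean structure of `F`. -/
noncomputable def subIntegral {n : ℕ} (F : Submodule ℝ (EuclideanSpace ℝ (Fin n)))
    (f : EuclideanSpace ℝ (Fin n) → ℝ) : ℝ :=
  ∫ x : EuclideanSpace ℝ (Fin (Module.finrank ℝ F)),
    f (((stdOrthonormalBasis ℝ F).repr.symm x : F) : EuclideanSpace ℝ (Fin n))

def LogConcave {n : ℕ} (f : EuclideanSpace ℝ (Fin n) → ℝ) : Prop :=
  (∀ x, 0 ≤ f x) ∧ ∀ x y : EuclideanSpace ℝ (Fin n), ∀ t : ℝ, t ∈ Set.Icc (0:ℝ) 1 →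
    f ((1 - t) • x + t • y) ≥ f x ^ (1 - t) * f y ^ t

open Finset Function

section Finner
variable {δ : Type*} [DecidableEq δ] {A : δ → Type*} [∀ i, MeasurableSpace (A i)]
  (μ : ∀ i, Measure (A i)) [∀ i, SigmaFinite (μ i)]
variable {δ : Type*} [DecidableEq δ] {A : δ → Type*} [∀ i, MeasurableSpace (A i)]
  (μ : ∀ i, Measure (A i)) [∀ i, SigmaFinite (μ i)]

lemma finner_aux (C : Finset (Finset δ)) (w : Finset δ → ℝ)
    (s : Finset δ)
    (f : Finset δ → (∀ i, A i) → ℝ≥0∞)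
    (hw : ∀ σ ∈ C, 0 ≤ w σ)
    (hf : ∀ σ ∈ C, Measurable (f σ))
    (hdep : ∀ σ ∈ C, ∀ j ∉ σ, ∀ x t, f σ (Function.update x j t) = f σ x)
    (hcov : ∀ i ∈ s, ∑ σ ∈ C.filter (fun σ => i ∈ σ), w σ = 1) :
    ∫⋯∫⁻_s, (fun x => ∏ σ ∈ C, f σ x ^ w σ) ∂μ ≤
      fun x => ∏ σ ∈ C, ((∫⋯∫⁻_(σ ∩ s), f σ ∂μ) x) ^ w σ := by
  induction s using Finset.induction generalizing f with
  | empty => simp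
  | @insert i s hi ih =>
    set g : Finset δ → (∀ i, A i) → ℝ≥0∞ :=
      fun σ => if i ∈ σ then ∫⋯∫⁻_{i}, f σ ∂μ else f σ with hg
    have hmeasF : Measurable fun x => ∏ σ ∈ C, f σ x ^ w σ :=
      Finset.measurable_prod _ fun σ hσ => (hf σ hσ).pow_const _
    have hgmeas : ∀ σ ∈ C, Measurable (g σ) := by
      intro σ hσ
      by_cases h : i ∈ σ <;> simp only [hg, h, if_true, if_false]
      · exact (hf σ hσ).lmarginal μ
      · exact hf σ hσ
    have hgdep : ∀ σ ∈ C, ∀ j ∉ σ, ∀ x t, g σ (Function.update x j t) = g σ x := by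
      intro σ hσ j hj x t
      by_cases h : i ∈ σ <;> simp only [hg, h, if_true, if_false]
      · have hji : j ≠ i := fun hji => hj (hji ▸ h)
        rw [lmarginal_update_of_notMem (hf σ hσ) (by simp [hji]) x t]
        congr 1
        ext y
        exact hdep σ hσ j hj y t
      · exact hdep σ hσ j hj x t
    calc ∫⋯∫⁻_insert i s, (fun x => ∏ σ ∈ C, f σ x ^ w σ) ∂μ
        = ∫⋯∫⁻_s, (fun x => ∫⁻ t, ∏ σ ∈ C, f σ (update x i t) ^ w σ ∂μ i) ∂μ := by
          rw [lmarginal_insert' _ hmeasF hi]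
      _ ≤ ∫⋯∫⁻_s, (fun x => ∏ σ ∈ C, g σ x ^ w σ) ∂μ := by
          refine lmarginal_mono fun x => ?_
          calc ∫⁻ t, ∏ σ ∈ C, f σ (update x i t) ^ w σ ∂μ i
              = ∫⁻ t, (∏ σ ∈ C.filter (fun σ => i ∈ σ), f σ (update x i t) ^ w σ) *
                  ∏ σ ∈ C.filter (fun σ => ¬ i ∈ σ), f σ x ^ w σ ∂μ i := by
                congr 1; ext t
                rw [← prod_filter_mul_prod_filter_not C (fun σ => i ∈ σ)]
                congr 1
                refine prod_congr rfl fun σ hσ => ?_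
                rw [mem_filter] at hσ
                rw [hdep σ hσ.1 i hσ.2 x t]
            _ = (∏ σ ∈ C.filter (fun σ => ¬ i ∈ σ), f σ x ^ w σ) *
                  ∫⁻ t, ∏ σ ∈ C.filter (fun σ => i ∈ σ), f σ (update x i t) ^ w σ ∂μ i := by
                rw [← lintegral_const_mul]
                · congr 1; ext t; ring
                · exact Finset.measurable_prod _ fun σ hσ =>
                    (((hf σ (mem_filter.mp hσ).1).comp (measurable_update x)).pow_const _)
            _ ≤ (∏ σ ∈ C.filter (fun σ => ¬ i ∈ σ), f σ x ^ w σ) *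
                  ∏ σ ∈ C.filter (fun σ => i ∈ σ), (∫⁻ t, f σ (update x i t) ∂μ i) ^ w σ := by
                gcongr
                refine ENNReal.lintegral_prod_norm_pow_le _ (fun σ hσ => ?_) (hcov i (mem_insert_self i s)) (fun σ hσ => hw σ (mem_filter.mp hσ).1)
                exact ((hf σ (mem_filter.mp hσ).1).comp (measurable_update x)).aemeasurable
            _ = (∏ σ ∈ C.filter (fun σ => ¬ i ∈ σ), g σ x ^ w σ) *
                  ∏ σ ∈ C.filter (fun σ => i ∈ σ), g σ x ^ w σ := by
                congr 1
                · refine prod_congr rfl fun σ hσ => ?_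
                  rw [mem_filter] at hσ; simp [hg, hσ.2]
                · refine prod_congr rfl fun σ hσ => ?_
                  rw [mem_filter] at hσ
                  simp only [hg, hσ.2, if_true]
                  rw [lmarginal_singleton]
            _ = ∏ σ ∈ C, g σ x ^ w σ := by
                rw [mul_comm, prod_filter_mul_prod_filter_not]
      _ ≤ fun x => ∏ σ ∈ C, ((∫⋯∫⁻_(σ ∩ s), g σ ∂μ) x) ^ w σ := by
          exact ih g hgmeas hgdep (fun j hj => hcov j (mem_insert_of_mem hj))
      _ = fun x => ∏ σ ∈ C, ((∫⋯∫⁻_(σ ∩ insert i s), f σ ∂μ) x) ^ w σ := by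
          ext x
          refine prod_congr rfl fun σ hσ => ?_
          by_cases h : i ∈ σ
          · have h1 : σ ∩ insert i s = insert i (σ ∩ s) := by
              ext j
              simp only [Finset.mem_inter, Finset.mem_insert]
              constructor
              · rintro ⟨hjσ, rfl | hjs⟩
                exacts [Or.inl rfl, Or.inr ⟨hjσ, hjs⟩]
              · rintro (rfl | ⟨h1, h2⟩)
                exacts [⟨h, Or.inl rfl⟩, ⟨h1, Or.inr h2⟩]
            have h2 : i ∉ σ ∩ s := by simp [hi]
            simp only [hg, h, if_true]
            rw [h1, Finset.insert_eq, Finset.union_comm,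
              lmarginal_union μ (f σ) (hf σ hσ) (by simp [Finset.disjoint_singleton_right, h2])]
          · have h1 : σ ∩ insert i s = σ ∩ s := by
              ext j
              simp only [Finset.mem_inter, Finset.mem_insert]
              constructor
              · rintro ⟨hjσ, rfl | hjs⟩
                exacts [absurd hjσ h, ⟨hjσ, hjs⟩]
              · rintro ⟨h1, h2⟩
                exact ⟨h1, Or.inr h2⟩
            simp only [hg, h, if_false, h1]
end Finner

section Geo
variable {n : ℕ} {σ : Finset (Fin n)}

/-- The truncation vector. -/
noncomputable def truncV (σ : Finset (Fin n)) (x : Fin n → ℝ) : EuclideanSpace ℝ (Fin n) :=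
  WithLp.toLp 2 (fun i => if i ∈ σ then x i else 0)

lemma truncV_mem (x : Fin n → ℝ) : truncV σ x ∈ coordSubspace n σ := by
  have : truncV σ x = ∑ j ∈ σ, x j • EuclideanSpace.single j (1:ℝ) := by
    ext i
    simp only [truncV]
    rw [show (∑ j ∈ σ, x j • EuclideanSpace.single j (1:ℝ)) i
        = ∑ j ∈ σ, (x j • EuclideanSpace.single j (1:ℝ)) i from by rw [WithLp.ofLp_sum, Finset.sum_apply]]
    simp only [PiLp.smul_apply, EuclideanSpace.single_apply, smul_eq_mul, mul_ite, mul_one, mul_zero]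
    rw [Finset.sum_ite_eq σ i x]
  rw [this]
  exact Submodule.sum_mem _ fun j hj => Submodule.smul_mem _ _
    (Submodule.subset_span ⟨j, by simpa using hj, rfl⟩)

lemma coordSubspace_apply_eq_zero {x : EuclideanSpace ℝ (Fin n)}
    (hx : x ∈ coordSubspace n σ) {i : Fin n} (hi : i ∉ σ) : x i = 0 := by
  induction hx using Submodule.span_induction with
  | mem v hv =>
    obtain ⟨j, hj, rfl⟩ := hv
    show EuclideanSpace.single j (1:ℝ) i = 0
    rw [EuclideanSpace.single_apply, if_neg]
    rintro rfl
    exact hi (Finset.mem_coe.mp hj)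
  | zero => rfl
  | add v w _ _ hv hw =>
    have : v i + w i = 0 := by rw [hv, hw, add_zero]
    exact this
  | smul a v _ hv =>
    have : a * v i = 0 := by rw [hv, mul_zero]
    exact this

lemma projCLM_coordSubspace_apply (x : EuclideanSpace ℝ (Fin n)) :
    projCLM (coordSubspace n σ) x = truncV σ x := by
  have h := eq_starProjection_of_mem_of_inner_eq_zero (K := coordSubspace n σ)
    (u := x) (truncV_mem (σ := σ) x) ?_
  · exact h
  · intro w hw
    induction hw using Submodule.span_induction with
    | mem v hv =>
      obtain ⟨j, hj, rfl⟩ := hv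
      have hj' : j ∈ σ := Finset.mem_coe.mp hj
      rw [real_inner_comm, EuclideanSpace.inner_single_left]
      simp only [map_one, one_mul]
      show x j - truncV σ x j = 0
      simp [truncV, hj']
    | zero => exact inner_zero_right _
    | add v w _ _ hv hw => rw [inner_add_right, hv, hw, add_zero]
    | smul a v _ hv => rw [real_inner_smul_right, hv, mul_zero]

noncomputable def embV (σ : Finset (Fin n)) (y : {i // i ∈ σ} → ℝ) : EuclideanSpace ℝ (Fin n) :=
  WithLp.toLp 2 (fun i => if h : i ∈ σ then y ⟨i, h⟩ else 0)

lemma embV_mem (y : {i // i ∈ σ} → ℝ) : embV σ y ∈ coordSubspace n σ := by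
  have : embV σ y = truncV σ (embV σ y) := by
    ext i
    simp only [truncV, embV]
    by_cases h : i ∈ σ <;> simp [h]
  rw [this]
  exact truncV_mem _

noncomputable def coordONB (σ : Finset (Fin n)) :
    OrthonormalBasis {i // i ∈ σ} ℝ (coordSubspace n σ) :=
  OrthonormalBasis.mk
    (v := fun j => ⟨EuclideanSpace.single j.1 1, Submodule.subset_span ⟨j.1, j.2, rfl⟩⟩)
    (by
      have h := EuclideanSpace.orthonormal_single (𝕜 := ℝ) (ι := Fin n)
      rw [orthonormal_iff_ite] at h ⊢
      intro i j
      rw [Submodule.coe_inner]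
      rw [h i.1 j.1]
      by_cases hij : i = j
      · simp [hij]
      · rw [if_neg hij, if_neg (fun hh => hij (Subtype.ext hh))])
    (by
      rw [← Submodule.map_le_map_iff_of_injective (Submodule.injective_subtype (coordSubspace n σ))]
      rw [Submodule.map_span, Submodule.map_top, Submodule.range_subtype]
      refine le_trans ?_ (Submodule.span_mono (s := (fun j => EuclideanSpace.single j (1:ℝ)) '' ↑σ) ?_)
      · exact le_of_eq rfl
      · rintro v ⟨j, hj, rfl⟩
        exact ⟨_, ⟨⟨j, hj⟩, rfl⟩, rfl⟩)

lemma coordONB_repr_symm (y : {i // i ∈ σ} → ℝ) :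
    (((coordONB σ).repr.symm (WithLp.toLp 2 y : EuclideanSpace ℝ {i // i ∈ σ}) : coordSubspace n σ) :
      EuclideanSpace ℝ (Fin n)) = embV σ y := by
  have : (coordONB σ).repr ⟨embV σ y, embV_mem y⟩ = WithLp.toLp 2 y := by
    ext j
    rw [OrthonormalBasis.repr_apply_apply]
    rw [Submodule.coe_inner]
    have : ((coordONB σ) j : EuclideanSpace ℝ (Fin n)) = EuclideanSpace.single j.1 1 := by
      simp [coordONB, OrthonormalBasis.coe_mk]
    rw [this, EuclideanSpace.inner_single_left]
    simp only [map_one, one_mul]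
    show (if h : j.1 ∈ σ then y ⟨j.1, h⟩ else 0) = y j
    rw [dif_pos j.2]
  conv_lhs => rw [← this, LinearIsometryEquiv.symm_apply_apply]

lemma svol_eq (A : Set (EuclideanSpace ℝ (Fin n))) :
    svol (coordSubspace n σ) A = volume {y : {i // i ∈ σ} → ℝ | embV σ y ∈ A} := by
  classical
  set F := coordSubspace n σ with hF
  set b := coordONB σ with hb
  set std := stdOrthonormalBasis ℝ F with hstd
  set li : EuclideanSpace ℝ {i // i ∈ σ} ≃ₗᵢ[ℝ] EuclideanSpace ℝ (Fin (Module.finrank ℝ F)) :=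
    b.repr.symm.trans std.repr with hli
  set S : Set F := ((↑) ⁻¹' A : Set F) with hS
  set T : Set (EuclideanSpace ℝ {i // i ∈ σ}) := b.repr '' S with hT
  have h1 : std.repr '' S = li '' T := by
    rw [hT, Set.image_image]
    apply Set.image_congr
    intro x _
    rw [hli]
    rw [LinearIsometryEquiv.trans_apply, LinearIsometryEquiv.symm_apply_apply]
  have h2 : volume (li '' T) = volume T := by
    rw [LinearIsometryEquiv.image_eq_preimage_symm]
    exact (li.symm.measurePreserving).measure_preimage_emb li.symm.toHomeomorph.measurableEmbedding T
  have h3 : volume T =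
      volume (((MeasurableEquiv.toLp 2 ({i // i ∈ σ} → ℝ)).symm).symm ⁻¹' T) :=
    (MeasurePreserving.measure_preimage_equiv
      ((EuclideanSpace.volume_preserving_symm_measurableEquiv_toLp {i // i ∈ σ}).symm) T).symm
  have h4 : ((MeasurableEquiv.toLp 2 ({i // i ∈ σ} → ℝ)).symm).symm ⁻¹' T
      = {y : {i // i ∈ σ} → ℝ | embV σ y ∈ A} := by
    ext y
    have hesymm : ((MeasurableEquiv.toLp 2 ({i // i ∈ σ} → ℝ)).symm).symm y
        = (WithLp.toLp 2 y : EuclideanSpace ℝ {i // i ∈ σ}) := rfl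
    simp only [Set.mem_preimage, Set.mem_setOf_eq, hesymm, hT]
    constructor
    · rintro ⟨x, hx, hxy⟩
      have hx' : x = b.repr.symm (WithLp.toLp 2 y : EuclideanSpace ℝ {i // i ∈ σ}) := by
        rw [← hxy, LinearIsometryEquiv.symm_apply_apply]
      rw [hx'] at hx
      have h5 := coordONB_repr_symm (σ := σ) y
      rw [hS] at hx
      simp only [Set.mem_preimage] at hx
      rwa [h5] at hx
    · intro hA
      refine ⟨b.repr.symm (WithLp.toLp 2 y : EuclideanSpace ℝ {i // i ∈ σ}), ?_,
        LinearIsometryEquiv.apply_symm_apply _ _⟩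
      rw [hS]
      simp only [Set.mem_preimage]
      rw [coordONB_repr_symm (σ := σ) y]
      exact hA
  rw [svol, ← hstd, ← hS, h1, h2, h3, h4]

lemma truncV_measurable (σ : Finset (Fin n)) : Measurable (truncV σ) := by
  have h : Measurable (fun x : Fin n → ℝ => (fun i => if i ∈ σ then x i else 0 : Fin n → ℝ)) := by
    refine measurable_pi_lambda _ fun i => ?_
    by_cases h : i ∈ σ
    · simp only [h, if_true]; exact measurable_pi_apply i
    · simp only [h, if_false]; exact measurable_const
  exact ((MeasurableEquiv.toLp 2 (Fin n → ℝ)).symm).symm.measurable.comp h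

lemma embV_measurable (σ : Finset (Fin n)) : Measurable (embV σ) := by
  have h : Measurable (fun y : {i // i ∈ σ} → ℝ => (fun i => if h : i ∈ σ then y ⟨i, h⟩ else 0 : Fin n → ℝ)) := by
    refine measurable_pi_lambda _ fun i => ?_
    by_cases h : i ∈ σ
    · simp only [h, dif_pos]; exact measurable_pi_apply _
    · simp only [h, dif_neg, not_false_iff]; exact measurable_const
  exact ((MeasurableEquiv.toLp 2 (Fin n → ℝ)).symm).symm.measurable.comp h


end Geo

theorem weighted_cover_inequality (n : ℕ) (C : Finset (Finset (Fin n)))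
    (hne : ∀ σ ∈ C, σ.Nonempty)
    (w : Finset (Fin n) → ℝ) (hw : ∀ σ ∈ C, 0 < w σ)
    (hcov : ∀ i : Fin n, ∑ σ ∈ C.filter (fun σ => i ∈ σ), w σ = 1)
    (K : Set (EuclideanSpace ℝ (Fin n))) (hK : IsCompact K) :
    volume K ≤ ∏ σ ∈ C, svol (coordSubspace n σ) (projCLM (coordSubspace n σ) '' K) ^ (w σ) := by
  classical
  set e := (MeasurableEquiv.toLp 2 (Fin n → ℝ)).symm with he
  set S : Set (Fin n → ℝ) := e '' K with hSdef
  set Aset : Finset (Fin n) → Set (EuclideanSpace ℝ (Fin n)) :=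
    fun σ => projCLM (coordSubspace n σ) '' K with hAdef
  have hAcompact : ∀ σ, IsCompact (Aset σ) :=
    fun σ => hK.image (projCLM (coordSubspace n σ)).continuous
  have hAmeas : ∀ σ, MeasurableSet (Aset σ) := fun σ => (hAcompact σ).isClosed.measurableSet
  set g : Finset (Fin n) → (Fin n → ℝ) → ℝ≥0∞ :=
    fun σ => (truncV σ ⁻¹' (Aset σ)).indicator 1 with hgdef
  have hgmeas : ∀ σ ∈ C, Measurable (g σ) := fun σ _ =>
    (measurable_one).indicator ((truncV_measurable σ) (hAmeas σ))
  have hgdep : ∀ σ ∈ C, ∀ j ∉ σ, ∀ (x : Fin n → ℝ) (t : ℝ),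
      g σ (Function.update x j t) = g σ x := by
    intro σ _ j hj x t
    have : truncV σ (Function.update x j t) = truncV σ x := by
      ext i
      simp only [truncV]
      by_cases h : i ∈ σ
      · rw [if_pos h, if_pos h, Function.update_of_ne (fun hij : i = j => hj (hij ▸ h))]
      · rw [if_neg h, if_neg h]
    simp only [hgdef, Set.indicator, Set.mem_preimage, this, Pi.one_apply]
  -- compactness of S
  have hScompact : IsCompact S := hK.image (PiLp.continuous_ofLp 2 (fun _ : Fin n => ℝ))
  have hSmeas : MeasurableSet S := hScompact.isClosed.measurableSet
  -- pointwise bound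
  have hpt : ∀ x : Fin n → ℝ, S.indicator (1 : (Fin n → ℝ) → ℝ≥0∞) x ≤ ∏ σ ∈ C, g σ x ^ w σ := by
    intro x
    by_cases hx : x ∈ S
    · rw [Set.indicator_of_mem hx]
      obtain ⟨k, hk, rfl⟩ := hx
      have hgx : ∀ σ ∈ C, g σ (e k) = 1 := by
        intro σ _
        have htr : truncV σ (e k) ∈ Aset σ := by
          have : truncV σ (e k) = projCLM (coordSubspace n σ) k := by
            rw [projCLM_coordSubspace_apply]
            rfl
          rw [this]
          exact ⟨k, hk, rfl⟩
        simp only [hgdef, Set.indicator, Set.mem_preimage, htr, if_true]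
        rfl
      rw [show (∏ σ ∈ C, g σ (e k) ^ w σ) = ∏ σ ∈ C, (1:ℝ≥0∞) ^ w σ from
        Finset.prod_congr rfl fun σ hσ => by rw [hgx σ hσ]]
      simp
    · rw [Set.indicator_of_notMem hx]
      exact zero_le
  -- the marginal computation for each σ
  have hmarg : ∀ σ ∈ C,
      (∫⋯∫⁻_σ, g σ ∂(fun _ : Fin n => (volume : Measure ℝ))) 0 =
        svol (coordSubspace n σ) (Aset σ) := by
    intro σ _
    have h1 : (∫⋯∫⁻_σ, g σ ∂(fun _ : Fin n => (volume : Measure ℝ))) 0 =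
        ∫⁻ y : ((i : ↥σ) → ℝ), g σ (updateFinset 0 σ y)
          ∂Measure.pi (fun _ : ↥σ => volume) := rfl
    have h2 : ∀ y : ((i : ↥σ) → ℝ), g σ (updateFinset 0 σ y) =
        ({y : {i // i ∈ σ} → ℝ | embV σ y ∈ Aset σ}).indicator 1 y := by
      intro y
      have htr : truncV σ (updateFinset 0 σ y) = embV σ y := by
        ext i
        simp only [truncV, embV, updateFinset]
        by_cases h : i ∈ σ
        · rw [if_pos h, dif_pos h, dif_pos h]
        · rw [if_neg h, dif_neg h]
      simp only [hgdef, Set.indicator, Set.mem_preimage, htr, Set.mem_setOf_eq, Pi.one_apply]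
    rw [h1]
    rw [lintegral_congr h2]
    have hmeasset : MeasurableSet {y : {i // i ∈ σ} → ℝ | embV σ y ∈ Aset σ} :=
      (embV_measurable σ) (hAmeas σ)
    rw [lintegral_indicator_one hmeasset]
    rw [svol_eq]
    rw [← volume_pi]
  -- main chain
  have hvol : volume K = volume S := by
    rw [show volume S = volume (e ⁻¹' S) from
      (MeasurePreserving.measure_preimage_equiv
        (EuclideanSpace.volume_preserving_symm_measurableEquiv_toLp (Fin n)) S).symm]
    rw [hSdef, Set.preimage_image_eq K e.injective]
  rw [hvol]
  have hvol2 : volume S = (∫⋯∫⁻_Finset.univ, S.indicator (1 : (Fin n → ℝ) → ℝ≥0∞)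
      ∂(fun _ : Fin n => (volume : Measure ℝ))) 0 := by
    rw [← lintegral_eq_lmarginal_univ, ← lintegral_indicator_one hSmeas, volume_pi]
  rw [hvol2]
  have hfin := finner_aux (A := fun _ : Fin n => ℝ) (fun _ => (volume : Measure ℝ)) C w
    Finset.univ g (fun σ hσ => (hw σ hσ).le) hgmeas hgdep (fun i _ => hcov i)
  have hmono := lmarginal_mono (μ := fun _ : Fin n => (volume : Measure ℝ))
    (s := Finset.univ) hpt
  calc (∫⋯∫⁻_Finset.univ, S.indicator (1 : (Fin n → ℝ) → ℝ≥0∞)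
        ∂(fun _ : Fin n => (volume : Measure ℝ))) 0
      ≤ (∫⋯∫⁻_Finset.univ, (fun x => ∏ σ ∈ C, g σ x ^ w σ)
        ∂(fun _ : Fin n => (volume : Measure ℝ))) 0 := hmono 0
    _ ≤ ∏ σ ∈ C, ((∫⋯∫⁻_(σ ∩ Finset.univ), g σ ∂(fun _ : Fin n => (volume : Measure ℝ))) 0) ^ w σ :=
        hfin 0
    _ = ∏ σ ∈ C, svol (coordSubspace n σ) (Aset σ) ^ w σ := by
        refine Finset.prod_congr rfl fun σ hσ => ?_
        rw [Finset.inter_univ, hmarg σ hσ]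
end

section
/- Let f : ℝⁿ → [0,∞) be log-concave with f(0) = 1, and let F₁,…,F_r be subspaces with dim F_i = d_i and weights c_i > 0 satisfying s·I_n = Σ c_i P_i. If z = Σ_{i=1}^r (c_i/s) x_i with x_i ∈ F_i, then f(z/n)ⁿ ≥ ∏_{i=1}^r f(x_i)^{c_i/s}. -/
open MeasureTheory Submodule
open scoped ENNReal

lemma trace_projCLM {n : ℕ} (F : Submodule ℝ (EuclideanSpace ℝ (Fin n))) :
    LinearMap.trace ℝ _ (projCLM F).toLinearMap = (Module.finrank ℝ F : ℝ) := by
  have : (projCLM F).toLinearMap =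
      (F.subtype) ∘ₗ ((orthogonalProjection F).toLinearMap) := rfl
  rw [this, LinearMap.trace_comp_comm']
  have h2 : (orthogonalProjection F).toLinearMap ∘ₗ F.subtype = LinearMap.id := by
    ext v
    simp [orthogonalProjection_mem_subspace_eq_self]
  rw [h2, LinearMap.trace_id]

theorem pointwise_log_concave_inequality (n r : ℕ) (s : ℝ) (hs : 0 < s)
    (f : EuclideanSpace ℝ (Fin n) → ℝ) (hf : LogConcave f) (hf0 : f 0 = 1)
    (F : Fin r → Submodule ℝ (EuclideanSpace ℝ (Fin n)))
    (c : Fin r → ℝ) (hc : ∀ i, 0 < c i)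
    (hdecomp : s • (ContinuousLinearMap.id ℝ (EuclideanSpace ℝ (Fin n))) =
      ∑ i : Fin r, c i • projCLM (F i))
    (x : Fin r → EuclideanSpace ℝ (Fin n)) (hx : ∀ i, x i ∈ F i)
    (z : EuclideanSpace ℝ (Fin n)) (hz : z = ∑ i : Fin r, (c i / s) • x i) :
    f ((n : ℝ)⁻¹ • z) ^ n ≥ ∏ i : Fin r, f (x i) ^ (c i / s) := by
  -- trace identity
  set d : Fin r → ℕ := fun i => Module.finrank ℝ (F i) with hd
  have htr : s * n = ∑ i : Fin r, c i * d i := by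
    have := congrArg (fun T : EuclideanSpace ℝ (Fin n) →L[ℝ] EuclideanSpace ℝ (Fin n) =>
      LinearMap.trace ℝ _ (ContinuousLinearMap.toLinearMap T)) hdecomp
    simpa [LinearMap.trace_id, trace_projCLM, smul_eq_mul,
      finrank_euclideanSpace_fin] using this
  -- case n = 0
  rcases Nat.eq_zero_or_pos n with hn0 | hn
  · subst hn0
    have hx0 : ∀ i, x i = 0 := fun i => Subsingleton.elim _ _
    have : ∀ i, f (x i) ^ (c i / s) = 1 := by
      intro i; rw [hx0 i, hf0, Real.one_rpow]
    simp [this]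
  -- case some f (x i) = 0
  by_cases hpos : ∀ i, 0 < f (x i)
  swap
  · push_neg at hpos
    obtain ⟨i₀, hi₀⟩ := hpos
    have hzero : f (x i₀) = 0 := le_antisymm hi₀ (hf.1 _)
    have : (∏ i : Fin r, f (x i) ^ (c i / s)) = 0 := by
      apply Finset.prod_eq_zero (Finset.mem_univ i₀)
      rw [hzero, Real.zero_rpow (div_pos (hc i₀) hs).ne']
    rw [this]
    exact pow_nonneg (hf.1 _) n
  -- main case
  have hn' : (0:ℝ) < n := by exact_mod_cast hn
  set S : Set (EuclideanSpace ℝ (Fin n)) := {v | 0 < f v} with hS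
  have hSconv : Convex ℝ S := by
    intro a ha b hb ta tb hta htb htab
    have h := hf.2 a b tb ⟨htb, by linarith⟩
    have h1 : (1 : ℝ) - tb = ta := by linarith
    rw [h1] at h
    have : (0:ℝ) < f a ^ ta * f b ^ tb :=
      mul_pos (Real.rpow_pos_of_pos ha _) (Real.rpow_pos_of_pos hb _)
    exact lt_of_lt_of_le this h
  have hconc : ConcaveOn ℝ S (fun v => Real.log (f v)) := by
    refine ⟨hSconv, ?_⟩
    intro a ha b hb ta tb hta htb htab
    have ha' : 0 < f a := ha
    have hb' : 0 < f b := hb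
    have h := hf.2 a b tb ⟨htb, by linarith⟩
    have h1 : (1 : ℝ) - tb = ta := by linarith
    rw [h1] at h
    simp only [smul_eq_mul]
    calc ta * Real.log (f a) + tb * Real.log (f b)
        = Real.log (f a ^ ta * f b ^ tb) := by
          rw [Real.log_mul (by positivity) (by positivity),
            Real.log_rpow ha', Real.log_rpow hb']
      _ ≤ Real.log (f (ta • a + tb • b)) :=
          Real.log_le_log (by positivity) h
  -- weights and points
  set w : Fin r → ℝ := fun i => c i * d i / (s * n) with hw
  set y : Fin r → EuclideanSpace ℝ (Fin n) := fun i => ((d i : ℝ))⁻¹ • x i with hy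
  have hw0 : ∀ i, 0 ≤ w i := by
    intro i
    have := (hc i).le
    positivity
  have hw1 : ∑ i : Fin r, w i = 1 := by
    rw [hw]
    rw [← Finset.sum_div]
    rw [← htr]
    field_simp
  -- if d i = 0 then x i = 0
  have hxd : ∀ i, d i = 0 → x i = 0 := by
    intro i hdi
    have : F i = ⊥ := Submodule.finrank_eq_zero.1 hdi
    simpa [this] using hx i
  -- f (y i) > 0 and log f(y i) ≥ (d i)⁻¹ * log f (x i)
  have hkey : ∀ i, 0 < f (y i) ∧ ((d i : ℝ))⁻¹ * Real.log (f (x i)) ≤ Real.log (f (y i)) := by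
    intro i
    rcases Nat.eq_zero_or_pos (d i) with hdi | hdi
    · have : y i = 0 := by simp [hy, hdi]
      rw [this, hf0]
      simp [hdi]
    · have hd1 : (1:ℝ) ≤ (d i : ℝ) := by exact_mod_cast hdi
      have ht : ((d i : ℝ))⁻¹ ∈ Set.Icc (0:ℝ) 1 := by
        constructor
        · positivity
        · rw [inv_le_one_iff₀]; right; exact hd1
      have h := hf.2 0 (x i) ((d i : ℝ))⁻¹ ht
      rw [hf0, Real.one_rpow, one_mul, smul_zero, zero_add] at h
      have hpos' : 0 < f (x i) ^ ((d i : ℝ))⁻¹ := Real.rpow_pos_of_pos (hpos i) _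
      refine ⟨lt_of_lt_of_le hpos' h, ?_⟩
      calc ((d i : ℝ))⁻¹ * Real.log (f (x i)) = Real.log (f (x i) ^ ((d i : ℝ))⁻¹) := by
            rw [Real.log_rpow (hpos i)]
        _ ≤ Real.log (f (y i)) := Real.log_le_log hpos' h
  -- the convex combination equals z/n
  have hcomb : ∑ i : Fin r, w i • y i = (n : ℝ)⁻¹ • z := by
    rw [hz, Finset.smul_sum]
    refine Finset.sum_congr rfl fun i _ => ?_
    rcases Nat.eq_zero_or_pos (d i) with hdi | hdi
    · simp [hy, hw, hxd i hdi]
    · have hdi' : (0:ℝ) < (d i : ℝ) := by exact_mod_cast hdi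
      rw [hy, hw, smul_smul, smul_smul]
      congr 1
      field_simp
  -- Jensen
  have hmem : ∀ i ∈ Finset.univ, y i ∈ S := fun i _ => (hkey i).1
  have hjensen := hconc.le_map_sum (fun i _ => hw0 i) hw1 hmem
  rw [hcomb] at hjensen
  have hzS : (n : ℝ)⁻¹ • z ∈ S := by
    rw [← hcomb]
    exact hSconv.sum_mem (fun i _ => hw0 i) hw1 hmem
  -- termwise comparison
  have hterm : ∀ i, c i / s * Real.log (f (x i)) ≤ (n : ℝ) * (w i * Real.log (f (y i))) := by
    intro i
    rcases Nat.eq_zero_or_pos (d i) with hdi | hdi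
    · have hx0 := hxd i hdi
      rw [hx0, hf0, Real.log_one]
      simp [hw, hdi]
    · have hdi' : (0:ℝ) < (d i : ℝ) := by exact_mod_cast hdi
      have h := (hkey i).2
      have hwn : (n:ℝ) * w i = c i * d i / s := by
        rw [hw]; field_simp
      have := mul_le_mul_of_nonneg_left h (mul_nonneg hn'.le (hw0 i))
      calc c i / s * Real.log (f (x i))
          = ((n:ℝ) * w i) * (((d i : ℝ))⁻¹ * Real.log (f (x i))) := by
            rw [hwn]; field_simp
        _ ≤ ((n:ℝ) * w i) * Real.log (f (y i)) := this
        _ = (n : ℝ) * (w i * Real.log (f (y i))) := by ring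
  have hsum : ∑ i : Fin r, c i / s * Real.log (f (x i)) ≤ (n : ℝ) * Real.log (f ((n : ℝ)⁻¹ • z)) := by
    calc ∑ i : Fin r, c i / s * Real.log (f (x i))
        ≤ ∑ i : Fin r, (n : ℝ) * (w i * Real.log (f (y i))) :=
          Finset.sum_le_sum fun i _ => hterm i
      _ = (n : ℝ) * ∑ i : Fin r, w i • Real.log (f (y i)) := by
          rw [Finset.mul_sum]; simp [smul_eq_mul]
      _ ≤ (n : ℝ) * Real.log (f ((n : ℝ)⁻¹ • z)) := by
          exact mul_le_mul_of_nonneg_left hjensen hn'.le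
  -- exponentiate
  calc ∏ i : Fin r, f (x i) ^ (c i / s)
      = Real.exp (∑ i : Fin r, c i / s * Real.log (f (x i))) := by
        rw [Real.exp_sum]
        refine Finset.prod_congr rfl fun i _ => ?_
        rw [Real.rpow_def_of_pos (hpos i)]
        ring_nf
    _ ≤ Real.exp ((n : ℝ) * Real.log (f ((n : ℝ)⁻¹ • z))) := Real.exp_le_exp.2 hsum
    _ = f ((n : ℝ)⁻¹ • z) ^ n := by
        rw [Real.exp_nat_mul, Real.exp_log hzS]
end
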